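/- arXiv:1004.2795 — 2 statements merged into one kernel-verified Lean document; each statement's English description precedes it below -/
import Mathlib

section
/- Let l ≥ 2 and n be positive integers and let C be a binary linear code of length l+n (a linear subspace of F_2^{l+n}). Let d^⊥ denote the minimum Hamming weight of a nonzero codeword of the dual code C^⊥. Suppose v_1,...,v_l ∈ C^⊥ are such that for each j the vector formed by the first l coordinates of v_j equals the j-th standard unit vector e_j of F_2^l, and let m = |(⋃_{j=1}^l supp(v_j)) \ {1,...,l}|. Then 2m ≥ 3(d^⊥ − l), i.e. m ≥ (3/2)(d^⊥ − l). -/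
/-- The dual code of a binary linear code `C ⊆ F_2^N` under the standard inner product. -/
def dualCode {N : ℕ} (C : Submodule (ZMod 2) (Fin N → ZMod 2)) :
    Submodule (ZMod 2) (Fin N → ZMod 2) where
  carrier := {v | ∀ c ∈ C, ∑ h, v h * c h = 0}
  add_mem' := by
    intro a b ha hb c hc
    simp only [Set.mem_setOf_eq] at *
    simp [Pi.add_apply, add_mul, Finset.sum_add_distrib, ha c hc, hb c hc]
  zero_mem' := by
    intro c hc
    simp
  smul_mem' := by
    intro r a ha c hc
    simp only [Set.mem_setOf_eq] at *
    simp [Pi.smul_apply, smul_eq_mul, mul_assoc, ← Finset.mul_sum, ha c hc]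

/-- The minimum Hamming weight of a nonzero codeword of `C`. -/
noncomputable def minWeight {N : ℕ} (C : Submodule (ZMod 2) (Fin N → ZMod 2)) : ℕ :=
  sInf {w | ∃ c ∈ C, c ≠ 0 ∧ w = hammingNorm c}

lemma card_symm_aux {α : Type} [DecidableEq α] (A B : Finset α) :
    A.card + B.card + (symmDiff A B).card = 2 * (A ∪ B).card := by
  have h1 : (A ∪ B).card + (A ∩ B).card = A.card + B.card :=
    Finset.card_union_add_card_inter A B
  have hdisj2 : Disjoint (symmDiff A B) (A ∩ B) := by
    rw [Finset.disjoint_left]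
    intro a ha hb
    simp only [Finset.mem_symmDiff] at ha
    simp only [Finset.mem_inter] at hb
    tauto
  have hun : (symmDiff A B) ∪ (A ∩ B) = A ∪ B := by
    ext h
    simp only [Finset.mem_union, Finset.mem_symmDiff, Finset.mem_inter]
    tauto
  have h2 : (symmDiff A B).card + (A ∩ B).card = (A ∪ B).card := by
    rw [← Finset.card_union_of_disjoint hdisj2, hun]
  omega

lemma norm_split {l n : ℕ} (hl0 : 0 < l) (x : Fin (l + n) → ZMod 2) :
    hammingNorm x =
      (Finset.univ.filter fun j : Fin l => x (Fin.castAdd n j) ≠ 0).card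
      + (Finset.univ.filter fun h : Fin (l + n) => x h ≠ 0 ∧ l ≤ (h : ℕ)).card := by
  have hsplit : (Finset.univ.filter fun h : Fin (l + n) => x h ≠ 0)
      = (Finset.univ.filter fun h : Fin (l + n) => x h ≠ 0 ∧ (h : ℕ) < l)
        ∪ (Finset.univ.filter fun h : Fin (l + n) => x h ≠ 0 ∧ l ≤ (h : ℕ)) := by
    ext h
    simp only [Finset.mem_filter, Finset.mem_union, Finset.mem_univ, true_and]
    rcases lt_or_ge (h : ℕ) l with h1 | h1
    · simp [h1, not_le.mpr h1]
    · simp [h1, not_lt.mpr h1]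
  have hdisj : Disjoint
      (Finset.univ.filter fun h : Fin (l + n) => x h ≠ 0 ∧ (h : ℕ) < l)
      (Finset.univ.filter fun h : Fin (l + n) => x h ≠ 0 ∧ l ≤ (h : ℕ)) := by
    rw [Finset.disjoint_left]
    intro a ha hb
    simp only [Finset.mem_filter] at ha hb
    omega
  have hfirst : (Finset.univ.filter fun h : Fin (l + n) => x h ≠ 0 ∧ (h : ℕ) < l).card
      = (Finset.univ.filter fun j : Fin l => x (Fin.castAdd n j) ≠ 0).card := by
    refine Finset.card_nbij' (fun h => (⟨(h : ℕ) % l, Nat.mod_lt _ hl0⟩ : Fin l))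
      (fun j => Fin.castAdd n j) ?_ ?_ ?_ ?_
    · intro h hh
      simp only [Finset.mem_coe, Finset.mem_filter, Finset.mem_univ, true_and] at hh ⊢
      have hmod : (h : ℕ) % l = (h : ℕ) := Nat.mod_eq_of_lt hh.2
      have : Fin.castAdd n (⟨(h : ℕ) % l, Nat.mod_lt _ hl0⟩ : Fin l) = h := by
        apply Fin.ext; simp [hmod]
      rw [this]; exact hh.1
    · intro j hj
      simp only [Finset.mem_coe, Finset.mem_filter, Finset.mem_univ, true_and] at hj ⊢
      exact ⟨hj, by simp⟩
    · intro h hh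
      simp only [Finset.mem_coe, Finset.mem_filter, Finset.mem_univ, true_and] at hh
      apply Fin.ext; simp [Nat.mod_eq_of_lt hh.2]
    · intro j hj
      apply Fin.ext
      simp [Nat.mod_eq_of_lt j.isLt]
  rw [hammingNorm, hsplit, Finset.card_union_of_disjoint hdisj, hfirst]

/-- **Corollary 4**: for a binary code `C` of length `l + n` with `l ≥ 2`, if
`v_1, …, v_l ∈ C^⊥` have the standard unit vectors of `F_2^l` as their first `l` coordinates
and `m` is the number of coordinates beyond the first `l` on which some `v_j` is nonzero,
then `m ≥ (3/2)(d^⊥ − l)` (stated in the equivalent integer form `3·d^⊥ ≤ 2·m + 3·l`),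
where `d^⊥` is the minimum weight of `C^⊥`. -/
theorem access_group_ge_three_halves
    (l n : ℕ) (hl : 2 ≤ l) (hn : 0 < n)
    (C : Submodule (ZMod 2) (Fin (l + n) → ZMod 2))
    (dperp : ℕ) (hd : dperp = minWeight (dualCode C))
    (v : Fin l → Fin (l + n) → ZMod 2)
    (hv : ∀ j, v j ∈ dualCode C)
    (hunit : ∀ j j' : Fin l, v j (Fin.castAdd n j') = if j' = j then 1 else 0)
    (m : ℕ)
    (hm : m = ((⋃ j, {h | v j h ≠ 0}) \ {h : Fin (l + n) | (h : ℕ) < l}).ncard) :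
    3 * dperp ≤ 2 * m + 3 * l := by
  have hle : ∀ x ∈ dualCode C, x ≠ 0 → dperp ≤ hammingNorm x := by
    intro x hx hx0
    rw [hd, minWeight]
    exact Nat.sInf_le ⟨x, hx, hx0, rfl⟩
  set j0 : Fin l := ⟨0, by omega⟩ with hj0
  set j1 : Fin l := ⟨1, by omega⟩ with hj1
  have hj01 : j0 ≠ j1 := by simp [hj0, hj1, Fin.ext_iff]
  set u := v j0 with hu
  set w := v j1 with hw
  set A := Finset.univ.filter fun h : Fin (l + n) => u h ≠ 0 ∧ l ≤ (h : ℕ) with hA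
  set B := Finset.univ.filter fun h : Fin (l + n) => w h ≠ 0 ∧ l ≤ (h : ℕ) with hB
  -- weight of u
  have huval : ∀ j : Fin l, u (Fin.castAdd n j) = if j = j0 then 1 else 0 := fun j => hunit j0 j
  have hwval : ∀ j : Fin l, w (Fin.castAdd n j) = if j = j1 then 1 else 0 := fun j => hunit j1 j
  have hcard1 : (Finset.univ.filter fun j : Fin l => u (Fin.castAdd n j) ≠ 0).card = 1 := by
    have : (Finset.univ.filter fun j : Fin l => u (Fin.castAdd n j) ≠ 0) = {j0} := by
      ext j
      rcases eq_or_ne j j0 with h | h <;> simp [huval, h]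
    rw [this, Finset.card_singleton]
  have hcard2 : (Finset.univ.filter fun j : Fin l => w (Fin.castAdd n j) ≠ 0).card = 1 := by
    have : (Finset.univ.filter fun j : Fin l => w (Fin.castAdd n j) ≠ 0) = {j1} := by
      ext j
      rcases eq_or_ne j j1 with h | h <;> simp [hwval, h]
    rw [this, Finset.card_singleton]
  have hcard3 : (Finset.univ.filter fun j : Fin l => (u + w) (Fin.castAdd n j) ≠ 0).card = 2 := by
    have : (Finset.univ.filter fun j : Fin l => (u + w) (Fin.castAdd n j) ≠ 0) = {j0, j1} := by
      ext j
      rcases eq_or_ne j j0 with h | h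
      · subst h; simp [huval, hwval, hj01, Ne.symm hj01]
      · rcases eq_or_ne j j1 with h' | h'
        · subst h'; simp [huval, hwval, Ne.symm hj01, h]
        · simp [huval, hwval, h, h']
    rw [this, Finset.card_insert_of_notMem (by simp [hj01]), Finset.card_singleton]
  have hu0 : u ≠ 0 := by
    intro h
    have := huval j0
    rw [h] at this
    simp at this
  have hw0 : (u + w) ≠ 0 := by
    intro h
    have := congrFun h (Fin.castAdd n j0)
    rw [Pi.add_apply, huval j0, hwval j0, if_pos rfl, if_neg hj01, Pi.zero_apply] at this
    exact absurd this (by decide)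
  have hw0' : w ≠ 0 := by
    intro h
    have := hwval j1
    rw [h] at this
    simp at this
  have hdu : dperp ≤ 1 + A.card := by
    have := hle u (hv j0) hu0
    rwa [norm_split (by omega) u, hcard1] at this
  have hdw : dperp ≤ 1 + B.card := by
    have := hle w (hv j1) hw0'
    rwa [norm_split (by omega) w, hcard2] at this
  have hduw : dperp ≤ 2 + (symmDiff A B).card := by
    have hmem : u + w ∈ dualCode C := (dualCode C).add_mem (hv j0) (hv j1)
    have := hle (u + w) hmem hw0
    rw [norm_split (by omega) (u + w), hcard3] at this
    have heq : (Finset.univ.filter fun h : Fin (l + n) => (u + w) h ≠ 0 ∧ l ≤ (h : ℕ))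
        = symmDiff A B := by
      ext h
      have key : ∀ a b : ZMod 2, (a + b ≠ 0) ↔ ((a ≠ 0 ∧ ¬ b ≠ 0) ∨ (b ≠ 0 ∧ ¬ a ≠ 0)) := by
        decide
      simp only [Finset.mem_symmDiff, hA, hB, Finset.mem_filter, Finset.mem_univ, true_and,
        Pi.add_apply, key]
      tauto
    rwa [heq] at this
  -- cardinal identity
  have hid : A.card + B.card + (symmDiff A B).card = 2 * (A ∪ B).card :=
    card_symm_aux A B
  -- m bound
  have hmge : (A ∪ B).card ≤ m := by
    rw [hm]
    rw [← Set.ncard_coe_finset]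
    apply Set.ncard_le_ncard _ (Set.toFinite _)
    intro h hh
    simp only [Finset.coe_union, Set.mem_union, Finset.mem_coe, hA, hB, Finset.mem_filter,
      Finset.mem_univ, true_and] at hh
    constructor
    · rcases hh with ⟨h1, _⟩ | ⟨h1, _⟩
      · exact Set.mem_iUnion.mpr ⟨j0, h1⟩
      · exact Set.mem_iUnion.mpr ⟨j1, h1⟩
    · simp only [Set.mem_setOf_eq, not_lt]
      rcases hh with ⟨_, h2⟩ | ⟨_, h2⟩ <;> exact h2
  omega
end

section
/- Let C be a self-dual binary linear code of length N ≥ 2, i.e. a linear subspace of F_2^N with C = C^⊥. Suppose v_1, v_2 ∈ C satisfy (v_1)_1 = 1, (v_1)_2 = 0, (v_2)_1 = 0, (v_2)_2 = 1. Then |(supp(v_1) ∪ supp(v_2)) \ {1,2}| is even. -/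
lemma even_support' {N : ℕ} (w : Fin N → ZMod 2) (h : ∑ i, w i = 0) :
    Even {i | w i ≠ 0}.ncard := by
  classical
  have hcard : {i | w i ≠ 0}.ncard = (Finset.univ.filter (fun i => w i ≠ 0)).card := by
    rw [Set.ncard_eq_toFinset_card']
    congr 1
    ext i
    simp
  have hsum : ∑ i, w i = ((Finset.univ.filter (fun i => w i ≠ 0)).card : ZMod 2) := by
    rw [← Finset.sum_filter_ne_zero]
    rw [Finset.sum_congr rfl (g := fun _ => (1 : ZMod 2)) (fun i hi => ?_)]
    · simp
    · have hne : w i ≠ 0 := by simpa using (Finset.mem_filter.mp hi).2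
      have : ∀ x : ZMod 2, x ≠ 0 → x = 1 := by decide
      exact this _ hne
  rw [hsum] at h
  rw [hcard, even_iff_two_dvd]
  exact (ZMod.natCast_eq_zero_iff _ 2).mp h

/-- **Proposition 8**: let `C` be a self-dual binary code of length `N ≥ 2` and let
`v₁, v₂ ∈ C` satisfy `(v₁)₁ = 1, (v₁)₂ = 0, (v₂)₁ = 0, (v₂)₂ = 1` (coordinates indexed from 1
in the paper, from 0 here).  Then the number of coordinates beyond the first two on which
`v₁` or `v₂` is nonzero is even. -/
theorem self_dual_minimal_access_group_even
    (N : ℕ) (hN : 2 ≤ N)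
    (C : Submodule (ZMod 2) (Fin N → ZMod 2))
    (hsd : C = dualCode C)
    (v₁ v₂ : Fin N → ZMod 2) (hv₁ : v₁ ∈ C) (hv₂ : v₂ ∈ C)
    (h₁₀ : v₁ ⟨0, by omega⟩ = 1) (h₁₁ : v₁ ⟨1, by omega⟩ = 0)
    (h₂₀ : v₂ ⟨0, by omega⟩ = 0) (h₂₁ : v₂ ⟨1, by omega⟩ = 1) :
    Even ((({h | v₁ h ≠ 0} ∪ {h | v₂ h ≠ 0}) \
      {(⟨0, by omega⟩ : Fin N), ⟨1, by omega⟩}).ncard) := by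
  have hdual : ∀ c ∈ C, ∀ c' ∈ C, ∑ h, c h * c' h = 0 := by
    intro c hc c' hc'
    have := hsd ▸ hc
    exact this c' hc'
  have hms : ∀ x : ZMod 2, x * x = x := by decide
  set A := {h | v₁ h ≠ 0}
  set B := {h | v₂ h ≠ 0}
  have eA : Even A.ncard := by
    apply even_support'
    have := hdual v₁ hv₁ v₁ hv₁
    simpa [hms] using this
  have eB : Even B.ncard := by
    apply even_support'
    have := hdual v₂ hv₂ v₂ hv₂
    simpa [hms] using this
  have eAB : Even (A ∩ B).ncard := by
    have h12 := hdual v₁ hv₁ v₂ hv₂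
    have := even_support' (fun i => v₁ i * v₂ i) h12
    have hset : {i | v₁ i * v₂ i ≠ 0} = A ∩ B := by
      ext i; simp [A, B, mul_ne_zero_iff]
    rwa [hset] at this
  have hIE := Set.ncard_union_add_ncard_inter A B (Set.toFinite A) (Set.toFinite B)
  have eU : Even (A ∪ B).ncard := by
    rcases eA with ⟨a, ha⟩; rcases eB with ⟨b, hb⟩; rcases eAB with ⟨c, hc⟩
    refine ⟨a + b - c, ?_⟩
    omega
  have h01 : (⟨0, by omega⟩ : Fin N) ≠ ⟨1, by omega⟩ := by
    simp [Fin.ext_iff]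
  have hsub : ({(⟨0, by omega⟩ : Fin N), ⟨1, by omega⟩} : Set (Fin N)) ⊆ A ∪ B := by
    intro x hx
    rcases hx with h | h
    · left; subst h; simp [A, h₁₀]
    · right; simp only [Set.mem_singleton_iff] at h; subst h; simp [B, h₂₁]
  have hU2 : 2 ≤ (A ∪ B).ncard := by
    have := Set.ncard_le_ncard hsub (Set.toFinite _)
    rwa [Set.ncard_pair h01] at this
  rw [Set.ncard_diff hsub (Set.toFinite _), Set.ncard_pair h01]
  rcases eU with ⟨u, hu⟩
  exact ⟨u - 1, by omega⟩
end
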